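/- Let Δ_h ⊂ R^3 be the Reeve tetrahedron with vertices (0,0,0), (0,1,0), (1,0,0), (1,1,h) for a positive integer h. Then the number of lattice points in nΔ_h equals (h/6)n^3 + n^2 + (2 − h/6)n + 1 for every positive integer n. -/

import Mathlib

open Pointwise

/-- The Reeve tetrahedron `Δ_h = conv{(0,0,0), (0,1,0), (1,0,0), (1,1,h)} ⊂ ℝ³`. -/
noncomputable def reeveTetrahedron (h : ℕ) : Set (Fin 3 → ℝ) :=
  convexHull ℝ {![0,0,0], ![0,1,0], ![1,0,0], ![1,1,(h : ℝ)]}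

lemma reeve_eq (h : ℕ) (hh : 0 < h) :
    reeveTetrahedron h = {p : Fin 3 → ℝ |
      0 ≤ p 2 ∧ p 2 ≤ h * p 0 ∧ p 2 ≤ h * p 1 ∧ (h:ℝ) * (p 0 + p 1) - p 2 ≤ h} := by
  have hh' : (0:ℝ) < h := by exact_mod_cast hh
  apply le_antisymm
  · apply convexHull_min
    · intro v hv
      simp only [Set.mem_insert_iff, Set.mem_singleton_iff] at hv
      rcases hv with rfl | rfl | rfl | rfl <;>
        refine ⟨?_, ?_, ?_, ?_⟩ <;>
          norm_num [Matrix.cons_val_zero, Matrix.cons_val_one, Matrix.head_cons,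
            Matrix.cons_val_two, Matrix.tail_cons] <;> linarith
    · intro p hp q hq a b ha hb hab
      simp only [Set.mem_setOf_eq, Pi.add_apply, Pi.smul_apply, smul_eq_mul] at *
      obtain ⟨p1, p2, p3, p4⟩ := hp
      obtain ⟨q1, q2, q3, q4⟩ := hq
      refine ⟨by nlinarith, by nlinarith, by nlinarith, by nlinarith⟩
  · intro p hp
    obtain ⟨h1, h2, h3, h4⟩ := hp
    have hdh : p 2 / (h:ℝ) * h = p 2 := div_mul_cancel₀ _ hh'.ne'
    set w : Fin 4 → ℝ := ![1 - p 0 - p 1 + p 2 / h, p 1 - p 2 / h, p 0 - p 2 / h, p 2 / h]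
      with hw
    set v : Fin 4 → (Fin 3 → ℝ) := ![![0,0,0], ![0,1,0], ![1,0,0], ![1,1,(h:ℝ)]] with hv
    have c0 : (∑ i : Fin 4, w i • v i) 0 = p 0 := by
      simp [hw, hv, Fin.sum_univ_four, Matrix.vecHead, Matrix.vecTail]
    have c1 : (∑ i : Fin 4, w i • v i) 1 = p 1 := by
      simp [hw, hv, Fin.sum_univ_four, Matrix.vecHead, Matrix.vecTail]
    have c2 : (∑ i : Fin 4, w i • v i) 2 = p 2 := by
      simp [hw, hv, Fin.sum_univ_four, Matrix.vecHead, Matrix.vecTail]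
      field_simp
    have key : p = ∑ i : Fin 4, w i • v i := by
      funext j
      fin_cases j
      · exact c0.symm
      · exact c1.symm
      · exact c2.symm
    rw [key]
    apply Convex.sum_mem (convex_convexHull ℝ _)
    · intro i _
      fin_cases i <;> simp [hw, Matrix.vecHead, Matrix.vecTail] <;>
        nlinarith [hdh, hh', h1, h2, h3, h4, div_nonneg h1 hh'.le]
    · simp [hw, Fin.sum_univ_four, Matrix.vecHead, Matrix.vecTail]
      try ring
    · intro i _
      apply subset_convexHull
      fin_cases i <;> simp [hv]

lemma mem_scaled (h n : ℕ) (hh : 0 < h) (hn : 0 < n) (x : Fin 3 → ℤ) :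
    ((fun i => (x i : ℝ)) ∈ (n : ℝ) • reeveTetrahedron h) ↔
      (0 ≤ x 2 ∧ x 2 ≤ h * x 0 ∧ x 2 ≤ h * x 1 ∧ h * (x 0 + x 1) ≤ x 2 + h * n) := by
  have hn' : (0:ℝ) < n := by exact_mod_cast hn
  have hh' : (0:ℝ) < h := by exact_mod_cast hh
  rw [Set.mem_smul_set_iff_inv_smul_mem₀ hn'.ne' , reeve_eq h hh]
  simp only [Set.mem_setOf_eq, Pi.smul_apply, smul_eq_mul]
  have hinv : (n:ℝ) * (n:ℝ)⁻¹ = 1 := mul_inv_cancel₀ hn'.ne'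
  have hinv0 : (0:ℝ) ≤ (n:ℝ)⁻¹ := by positivity
  constructor
  · rintro ⟨h1, h2, h3, h4⟩
    have e1 : (0:ℝ) ≤ x 2 := by nlinarith
    have e2 : (x 2 : ℝ) ≤ h * x 0 := by nlinarith
    have e3 : (x 2 : ℝ) ≤ h * x 1 := by nlinarith
    have e4 : (h:ℝ) * (x 0 + x 1) ≤ x 2 + h * n := by nlinarith
    refine ⟨by exact_mod_cast e1, by exact_mod_cast e2, by exact_mod_cast e3, ?_⟩
    exact_mod_cast e4
  · rintro ⟨h1, h2, h3, h4⟩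
    have e1 : (0:ℝ) ≤ x 2 := by exact_mod_cast h1
    have e2 : (x 2 : ℝ) ≤ h * x 0 := by exact_mod_cast h2
    have e3 : (x 2 : ℝ) ≤ h * x 1 := by exact_mod_cast h3
    have e4 : (h:ℝ) * (x 0 + x 1) ≤ x 2 + h * n := by exact_mod_cast h4
    refine ⟨by nlinarith, by nlinarith, by nlinarith, by nlinarith⟩


lemma gaussZ (m : ℕ) : (∑ b ∈ Finset.range m, (b:ℤ)) * 2 = m * (m - 1) := by
  induction m with
  | zero => simp
  | succ k ih =>
    rw [Finset.sum_range_succ]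
    push_cast
    push_cast at ih
    linarith

lemma sqZ (m : ℕ) : (∑ b ∈ Finset.range m, (b:ℤ)^2) * 6 = m * (m - 1) * (2*m - 1) := by
  induction m with
  | zero => simp
  | succ k ih =>
    rw [Finset.sum_range_succ]
    push_cast
    push_cast at ih
    nlinarith [ih]

lemma lemA (n a : ℕ) (ha : a ≤ n) :
    (∑ b ∈ Finset.range (n+1), min (a:ℤ) (b:ℤ)) * 2 = a * (2*n + 1 - a) := by
  induction n with
  | zero =>
    interval_cases a
    simp
  | succ k ih =>
    rcases Nat.lt_or_ge a (k+1) with hak | hak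
    · have hak' : a ≤ k := by omega
      have ih' := ih hak'
      rw [Finset.sum_range_succ]
      have hmin : min (a:ℤ) ((k:ℤ)+1) = a := by
        apply min_eq_left; exact_mod_cast Nat.le_succ_of_le hak'
      push_cast
      push_cast at ih'
      rw [hmin]
      push_cast
      linarith
    · have : a = k + 1 := by omega
      subst this
      have hmin' : ∀ b ∈ Finset.range (k+2), min (((k+1:ℕ)):ℤ) ((b:ℕ):ℤ) = ((b:ℕ):ℤ) := by
        intro b hb
        simp only [Finset.mem_range] at hb
        apply min_eq_right
        have : (b:ℤ) ≤ (k:ℤ) + 1 := by exact_mod_cast Nat.lt_succ_iff.mp hb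
        push_cast
        linarith
      rw [Finset.sum_congr rfl hmin']
      have := gaussZ (k+2)
      push_cast
      push_cast at this
      linarith

lemma lemB (n a : ℕ) (ha : a ≤ n) :
    (∑ b ∈ Finset.range (n+1), max 0 ((a:ℤ) + b - n)) * 2 = a * (a + 1) := by
  induction n with
  | zero =>
    interval_cases a
    simp
  | succ k ih =>
    rcases Nat.lt_or_ge a (k+1) with hak | hak
    · have hak' : a ≤ k := by omega
      have ih' := ih hak'
      rw [Finset.sum_range_succ']
      have h0 : max 0 ((a:ℤ) + ((0:ℕ):ℤ) - ((k+1:ℕ):ℤ)) = 0 := by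
        apply max_eq_left
        push_cast
        have : (a:ℤ) ≤ k := by exact_mod_cast hak'
        linarith
      have hshift : ∀ b ∈ Finset.range (k+1),
          max 0 ((a:ℤ) + ((b+1:ℕ):ℤ) - ((k+1:ℕ):ℤ)) = max 0 ((a:ℤ) + (b:ℕ) - (k:ℕ)) := by
        intro b _
        congr 1
        push_cast
        ring
      rw [h0, add_zero, Finset.sum_congr rfl hshift]
      exact ih'
    · have : a = k + 1 := by omega
      subst this
      have heq : ∀ b ∈ Finset.range (k+2), max 0 (((k+1:ℕ):ℤ) + b - (k+1:ℕ)) = (b:ℤ) := by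
        intro b _
        have : ((k+1:ℕ):ℤ) + b - (k+1:ℕ) = b := by push_cast; ring
        rw [this]
        exact max_eq_right (by positivity)
      rw [Finset.sum_congr rfl heq]
      have := gaussZ (k+2)
      push_cast
      push_cast at this
      linarith

lemma lemC (n : ℕ) : (∑ a ∈ Finset.range (n+1), (a:ℤ) * (n - a)) * 6 = n * (n+1) * (n-1) := by
  have g := gaussZ (n+1)
  have s := sqZ (n+1)
  have expand : ∑ a ∈ Finset.range (n+1), (a:ℤ) * (n - a)
      = (n:ℤ) * (∑ a ∈ Finset.range (n+1), (a:ℤ)) - ∑ a ∈ Finset.range (n+1), (a:ℤ)^2 := by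
    rw [Finset.mul_sum, ← Finset.sum_sub_distrib]
    apply Finset.sum_congr rfl
    intro a _
    ring
  push_cast at g s
  rw [expand]
  nlinarith [g, s]


section helpers

lemma le_hmin {h a b z : ℤ} (h0 : 0 ≤ h) (h1 : z ≤ h * a) (h2 : z ≤ h * b) :
    z ≤ h * min a b := by
  rcases le_total a b with hc | hc
  · rw [min_eq_left hc]; exact h1
  · rw [min_eq_right hc]; exact h2

lemma hmin_le_left {h a b : ℤ} (h0 : 0 ≤ h) : h * min a b ≤ h * a :=
  mul_le_mul_of_nonneg_left (min_le_left a b) h0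

lemma hmin_le_right {h a b : ℤ} (h0 : 0 ≤ h) : h * min a b ≤ h * b :=
  mul_le_mul_of_nonneg_left (min_le_right a b) h0

lemma hmax_mul {h t : ℤ} (h0 : 0 ≤ h) : max 0 (h * t) = h * max 0 t := by
  rcases le_total t 0 with hc | hc
  · rw [max_eq_left (mul_nonpos_of_nonneg_of_nonpos h0 hc), max_eq_left hc, mul_zero]
  · rw [max_eq_right (mul_nonneg h0 hc), max_eq_right hc]

end helpers

section count

variable (h n : ℕ)

/-- the fiber interval -/
def fiberLo (ab : ℤ × ℤ) : ℤ := max 0 ((h:ℤ) * (ab.1 + ab.2 - n))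
def fiberHi (ab : ℤ × ℤ) : ℤ := (h:ℤ) * min ab.1 ab.2

noncomputable def latticeG : Finset ((ℤ × ℤ) × ℤ) :=
  ((Finset.Icc (0:ℤ) n ×ˢ Finset.Icc (0:ℤ) n) ×ˢ Finset.Icc (0:ℤ) ((h:ℤ)*n)).filter
    (fun p => 0 ≤ p.2 ∧ p.2 ≤ (h:ℤ) * p.1.1 ∧ p.2 ≤ (h:ℤ) * p.1.2 ∧
      (h:ℤ) * (p.1.1 + p.1.2) ≤ p.2 + (h:ℤ) * n)

lemma latticeG_coe (hh : 0 < h) :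
    {p : (ℤ × ℤ) × ℤ | 0 ≤ p.2 ∧ p.2 ≤ (h:ℤ) * p.1.1 ∧ p.2 ≤ (h:ℤ) * p.1.2 ∧
      (h:ℤ) * (p.1.1 + p.1.2) ≤ p.2 + (h:ℤ) * n} = ↑(latticeG h n) := by
  have hhz : (0:ℤ) < h := by exact_mod_cast hh
  ext p
  simp only [Set.mem_setOf_eq, latticeG, Finset.coe_filter, Finset.mem_product,
    Finset.mem_Icc]
  constructor
  · rintro ⟨q1, q2, q3, q4⟩
    refine ⟨⟨⟨⟨?_, ?_⟩, ?_, ?_⟩, ?_, ?_⟩, q1, q2, q3, q4⟩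
    · nlinarith
    · nlinarith
    · nlinarith
    · nlinarith
    · exact q1
    · nlinarith
  · rintro ⟨-, hq⟩
    exact hq

lemma latticeG_fiber (hh : 0 < h) (ab : ℤ × ℤ)
    (hab : ab ∈ Finset.Icc (0:ℤ) n ×ˢ Finset.Icc (0:ℤ) n) :
    (latticeG h n).filter (fun p => p.1 = ab) =
      (Finset.Icc (fiberLo h n ab) (fiberHi h ab)).image (fun z => (ab, z)) := by
  have hhz : (0:ℤ) < h := by exact_mod_cast hh
  simp only [Finset.mem_product, Finset.mem_Icc] at hab
  obtain ⟨⟨ha0, han⟩, hb0, hbn⟩ := hab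
  ext p
  simp only [Finset.mem_filter, Finset.mem_image, Finset.mem_Icc, latticeG,
    Finset.mem_product, fiberLo, fiberHi]
  constructor
  · rintro ⟨⟨-, q1, q2, q3, q4⟩, hfst⟩
    rw [hfst] at q2 q3 q4
    exact ⟨p.2, ⟨max_le q1 (by nlinarith), le_hmin hhz.le q2 q3⟩, by rw [← hfst]⟩
  · rintro ⟨z, ⟨hlo, hhi⟩, rfl⟩
    have hlo1 : (0:ℤ) ≤ z := le_trans (le_max_left _ _) hlo
    have hlo2 : (h:ℤ) * (ab.1 + ab.2 - n) ≤ z := le_trans (le_max_right _ _) hlo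
    have hza : z ≤ (h:ℤ) * ab.1 := le_trans hhi (hmin_le_left hhz.le)
    have hzb : z ≤ (h:ℤ) * ab.2 := le_trans hhi (hmin_le_right hhz.le)
    refine ⟨⟨⟨⟨⟨ha0, han⟩, hb0, hbn⟩, hlo1, ?_⟩, hlo1, hza, hzb, ?_⟩, rfl⟩
    · nlinarith
    · nlinarith

lemma latticeG_card (hh : 0 < h) :
    ((latticeG h n).card : ℤ) =
      ∑ a ∈ Finset.Icc (0:ℤ) n, ∑ b ∈ Finset.Icc (0:ℤ) n,
        ((h:ℤ) * min a b + 1 - max 0 ((h:ℤ) * (a + b - n))) := by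
  have hhz : (0:ℤ) < h := by exact_mod_cast hh
  have hfib := Finset.card_eq_sum_card_fiberwise (f := Prod.fst) (s := latticeG h n)
    (t := Finset.Icc (0:ℤ) n ×ˢ Finset.Icc (0:ℤ) n) ?memfib
  case memfib =>
    intro p hp
    have hp := Finset.mem_filter.mp hp
    exact (Finset.mem_product.mp hp.1).1
  rw [hfib]
  push_cast
  rw [Finset.sum_product]
  apply Finset.sum_congr rfl
  intro a ha
  apply Finset.sum_congr rfl
  intro b hb
  simp only [Finset.mem_Icc] at ha hb
  rw [latticeG_fiber h n hh (a, b) (by simp [Finset.mem_product, Finset.mem_Icc, ha, hb])]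
  rw [Finset.card_image_of_injective _ (fun z1 z2 e => by simpa using e)]
  rw [Int.card_Icc]
  simp only [fiberLo, fiberHi]
  have hnonneg : max 0 ((h:ℤ) * (a + b - n)) ≤ (h:ℤ) * min a b + 1 := by
    apply le_trans _ (le_of_lt (lt_add_one _))
    apply max_le
    · exact mul_nonneg hhz.le (le_min ha.1 hb.1)
    · apply mul_le_mul_of_nonneg_left _ hhz.le
      rcases le_total a b with hc | hc
      · rw [min_eq_left hc]; omega
      · rw [min_eq_right hc]; omega
  rw [Int.toNat_of_nonneg (by linarith [hnonneg])]

end count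


lemma sum_Icc_eq_range (n : ℕ) (f : ℤ → ℤ) :
    ∑ a ∈ Finset.Icc (0:ℤ) n, f a = ∑ a ∈ Finset.range (n+1), f a := by
  have : Finset.Icc (0:ℤ) n = (Finset.range (n+1)).map ⟨Nat.cast, Nat.cast_injective⟩ := by
    ext x
    simp only [Finset.mem_Icc, Finset.mem_map, Finset.mem_range, Function.Embedding.coeFn_mk]
    constructor
    · rintro ⟨h0, h1⟩
      exact ⟨x.toNat, by omega, by omega⟩
    · rintro ⟨k, hk, rfl⟩
      omega
  rw [this, Finset.sum_map]
  rfl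

lemma inner_eval (h n a : ℕ) (ha : a ≤ n) :
    ∑ b ∈ Finset.range (n+1), ((h:ℤ) * min (a:ℤ) (b:ℤ) + 1 - max 0 ((h:ℤ)*((a:ℤ)+b-n)))
      = (h:ℤ) * ((a:ℤ)*((n:ℤ)-a)) + ((n:ℤ)+1) := by
  have hhz : (0:ℤ) ≤ h := by positivity
  have hA := lemA n a ha
  have hB := lemB n a ha
  have hrw : ∀ b ∈ Finset.range (n+1),
      (h:ℤ)*min (a:ℤ) (b:ℤ) + 1 - max 0 ((h:ℤ)*((a:ℤ)+b-n))
      = (h:ℤ)*(min (a:ℤ) (b:ℤ) - max 0 ((a:ℤ)+b-n)) + 1 := by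
    intro b _
    rw [hmax_mul hhz]; ring
  rw [Finset.sum_congr rfl hrw, Finset.sum_add_distrib, Finset.sum_const, Finset.card_range,
      ← Finset.mul_sum, Finset.sum_sub_distrib]
  have hs : (∑ b ∈ Finset.range (n+1), min (a:ℤ) (b:ℤ))
      - ∑ b ∈ Finset.range (n+1), max 0 ((a:ℤ)+b-n) = (a:ℤ)*((n:ℤ)-a) := by linarith
  rw [hs]
  simp [nsmul_eq_mul]

lemma total_eval (h n : ℕ) :
    (∑ a ∈ Finset.range (n+1), ∑ b ∈ Finset.range (n+1),
      ((h:ℤ) * min (a:ℤ) (b:ℤ) + 1 - max 0 ((h:ℤ)*((a:ℤ)+b-n)))) * 6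
      = (h:ℤ) * ((n:ℤ)*((n:ℤ)+1)*((n:ℤ)-1)) + 6*((n:ℤ)+1)^2 := by
  have hC := lemC n
  have hrw : ∀ a ∈ Finset.range (n+1),
      ∑ b ∈ Finset.range (n+1), ((h:ℤ) * min (a:ℤ) (b:ℤ) + 1 - max 0 ((h:ℤ)*((a:ℤ)+b-n)))
      = (h:ℤ) * ((a:ℤ)*((n:ℤ)-a)) + ((n:ℤ)+1) := by
    intro a ha
    exact inner_eval h n a (Nat.lt_succ_iff.mp (Finset.mem_range.mp ha))
  rw [Finset.sum_congr rfl hrw, Finset.sum_add_distrib, Finset.sum_const, Finset.card_range,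
      ← Finset.mul_sum]
  simp only [nsmul_eq_mul]
  push_cast
  nlinarith [hC]


lemma card_congr_step (h n : ℕ) :
    Nat.card {x : Fin 3 → ℤ | 0 ≤ x 2 ∧ x 2 ≤ (h:ℤ) * x 0 ∧ x 2 ≤ (h:ℤ) * x 1 ∧
        (h:ℤ) * (x 0 + x 1) ≤ x 2 + (h:ℤ) * n}
      = Nat.card {p : (ℤ × ℤ) × ℤ | 0 ≤ p.2 ∧ p.2 ≤ (h:ℤ) * p.1.1 ∧ p.2 ≤ (h:ℤ) * p.1.2 ∧
        (h:ℤ) * (p.1.1 + p.1.2) ≤ p.2 + (h:ℤ) * n} := by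
  apply Nat.card_congr
  refine ⟨fun x => ⟨((x.1 0, x.1 1), x.1 2), x.2⟩,
          fun p => ⟨![p.1.1.1, p.1.1.2, p.1.2], ?_⟩, ?_, ?_⟩
  · have hp := p.2
    simp only [Set.mem_setOf_eq, Matrix.cons_val_zero, Matrix.cons_val_one, Matrix.head_cons,
      Matrix.cons_val_two, Matrix.tail_cons]
    exact hp
  · intro x
    apply Subtype.ext
    funext j
    fin_cases j <;> simp
  · intro p
    apply Subtype.ext
    simp


/-- the number of lattice points of `nΔ_h` equals
`(h/6) n³ + n² + (2 - h/6) n + 1` for every positive integer `n`. -/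
theorem reeve_lattice_point_count (h n : ℕ) (hh : 0 < h) (hn : 0 < n) :
    (Nat.card {x : Fin 3 → ℤ |
        (fun i => (x i : ℝ)) ∈ (n : ℝ) • reeveTetrahedron h} : ℝ) =
      (h : ℝ) / 6 * n ^ 3 + n ^ 2 + (2 - (h : ℝ) / 6) * n + 1 := by
  have hset : {x : Fin 3 → ℤ | (fun i => (x i : ℝ)) ∈ (n : ℝ) • reeveTetrahedron h}
      = {x : Fin 3 → ℤ | 0 ≤ x 2 ∧ x 2 ≤ (h:ℤ) * x 0 ∧ x 2 ≤ (h:ℤ) * x 1 ∧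
          (h:ℤ) * (x 0 + x 1) ≤ x 2 + (h:ℤ) * n} :=
    Set.ext fun x => mem_scaled h n hh hn x
  rw [hset, card_congr_step h n, latticeG_coe h n hh, Nat.card_coe_set_eq,
    Set.ncard_coe_finset]
  have key : ((latticeG h n).card : ℤ) * 6 =
      (h:ℤ) * ((n:ℤ)*((n:ℤ)+1)*((n:ℤ)-1)) + 6*((n:ℤ)+1)^2 := by
    rw [latticeG_card h n hh, sum_Icc_eq_range,
      Finset.sum_congr rfl (fun a _ => sum_Icc_eq_range n _)]
    exact total_eval h n
  have keyR : ((latticeG h n).card : ℝ) * 6 =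
      (h:ℝ) * ((n:ℝ)*((n:ℝ)+1)*((n:ℝ)-1)) + 6*((n:ℝ)+1)^2 := by exact_mod_cast key
  linear_combination keyR / 6
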